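/- Let G be a finite group of exponent m, C a union of G-conjugacy classes, and t an integer coprime to m. If Σ_{z∈C} Θ(z) is fixed by the automorphism σ_t of ℚ(ζ_m) (σ_t(ζ_m)=ζ_m^t) for every character Θ of G induced from a cyclic subgroup, and x^{it} ∈ C ⟺ x^i ∈ C for all proper divisors i of |x| with 1 < i < |x| and all x ∈ C, then x ∈ C implies x^t ∈ C. -/

import Mathlib

noncomputable section
open IntermediateField

/-- `∑_{z ∈ C} Θ(z)` where `Θ` is the character of `G` induced from the character `θ` of
the cyclic subgroup `⟨x⟩` with `θ(x ^ i) = ω ^ i` (`ω` a root of unity of order dividing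
`|x|`), via the induced character formula. -/
def inducedCharSum {G : Type*} [Group G] [Fintype G] [DecidableEq G]
    (C : Finset G) (x : G) (ω : ℂ) : ℂ :=
  ∑ z ∈ C, (orderOf x : ℂ)⁻¹ *
    ∑ y : G, ∑ i ∈ Finset.range (orderOf x), if y⁻¹ * z * y = x ^ i then ω ^ i else 0

open Finset
lemma aux_geom {n : ℕ} {η : ℂ} (hη : IsPrimitiveRoot η n) (c : ℕ) :
    ∑ k ∈ range n, η ^ (k * c) = if n ∣ c then (n : ℂ) else 0 := by
  have h : ∀ k, η ^ (k*c) = (η^c)^k := fun k => by rw [← pow_mul, Nat.mul_comm]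
  simp only [h]
  by_cases hd : n ∣ c
  · rw [if_pos hd, (hη.pow_eq_one_iff_dvd c).mpr hd]; simp
  · rw [if_neg hd, geom_sum_eq (fun h1 => hd ((hη.pow_eq_one_iff_dvd c).mp h1)) n]
    rw [← pow_mul, Nat.mul_comm, pow_mul, hη.pow_eq_one]
    simp

lemma aux_cast_eq {n : ℕ} (hn2 : 1 < n) : ∀ i < n, ∀ j : ℕ, ((i : ZMod n) = (j : ZMod n) ↔ i = j % n) := by
  intro i hi j
  haveI : NeZero n := ⟨by omega⟩
  constructor
  · intro h
    have := congrArg ZMod.val h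
    rwa [ZMod.val_cast_of_lt hi, ZMod.val_natCast] at this
  · intro h
    rw [h, ZMod.natCast_mod]

lemma aux_d1 {n t : ℕ} (hn2 : 1 < n) (htn : Nat.Coprime t n) (s : ℕ) (hs : s + t % n = n) :
    ∀ i < n, (n ∣ s + i * t ↔ i = 1) := by
  intro i hi
  haveI : NeZero n := ⟨by omega⟩
  have hst : (s : ZMod n) = - (t : ZMod n) := by
    have h1 := congrArg (Nat.cast : ℕ → ZMod n) hs
    rw [Nat.cast_add, ZMod.natCast_mod, ZMod.natCast_self] at h1
    linear_combination h1
  have hu : IsUnit (t : ZMod n) := (ZMod.isUnit_iff_coprime t n).mpr htn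
  rw [← ZMod.natCast_eq_zero_iff]
  push_cast
  rw [hst]
  constructor
  · intro h
    have hit : (t : ZMod n) * i = (t : ZMod n) * 1 := by linear_combination h
    have := hu.mul_left_cancel hit
    have h2 := (aux_cast_eq hn2 i hi 1).mp (by rw [this]; norm_num)
    rwa [Nat.mod_eq_of_lt hn2] at h2
  · intro h; subst h; ring

lemma aux_d2 {n t : ℕ} (hn2 : 1 < n) (s : ℕ) (hs : s + t % n = n) :
    ∀ i < n, (n ∣ s + i ↔ i = t % n) := by
  intro i hi
  haveI : NeZero n := ⟨by omega⟩
  have hst : (s : ZMod n) = - (t : ZMod n) := by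
    have h1 := congrArg (Nat.cast : ℕ → ZMod n) hs
    rw [Nat.cast_add, ZMod.natCast_mod, ZMod.natCast_self] at h1
    linear_combination h1
  rw [← ZMod.natCast_eq_zero_iff]
  push_cast
  rw [hst, ← aux_cast_eq hn2 i hi t]
  constructor
  · intro h; linear_combination h
  · intro h; linear_combination h

lemma aux_claimA {G : Type*} [Group G] [Fintype G] [DecidableEq G]
    (C : Finset G) (x : G) (ω : ℂ) :
    inducedCharSum C x ω = (orderOf x : ℂ)⁻¹ *
      ∑ i ∈ range (orderOf x),
        ((∑ z ∈ C, (Finset.univ.filter fun y : G => y⁻¹ * z * y = x ^ i).card : ℕ) : ℂ) * ω ^ i := by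
  unfold inducedCharSum
  rw [← Finset.mul_sum]
  congr 1
  calc ∑ z ∈ C, ∑ y : G, ∑ i ∈ range (orderOf x), (if y⁻¹ * z * y = x ^ i then ω ^ i else 0)
      = ∑ z ∈ C, ∑ i ∈ range (orderOf x), ∑ y : G, (if y⁻¹ * z * y = x ^ i then ω ^ i else 0) :=
        Finset.sum_congr rfl fun z _ => Finset.sum_comm
    _ = ∑ i ∈ range (orderOf x), ∑ z ∈ C, ∑ y : G, (if y⁻¹ * z * y = x ^ i then ω ^ i else 0) :=
        Finset.sum_comm
    _ = _ := by
        refine Finset.sum_congr rfl fun i _ => ?_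
        push_cast
        rw [Finset.sum_mul]
        refine Finset.sum_congr rfl fun z _ => ?_
        rw [Finset.sum_ite, Finset.sum_const, Finset.sum_const_zero, add_zero, nsmul_eq_mul]


/-- The key inductive step in the proof of Theorem 2: if every sum `∑_{z ∈ C} Θ(z)` over
characters `Θ` induced from cyclic subgroups is fixed by `σ_t`, and `x^{it} ∈ C ⟺ x^i ∈ C`
for all divisors `i` of `|x|` with `1 < i < |x|`, then `x ∈ C` implies `x ^ t ∈ C`. -/
theorem stmt15 {G : Type*} [Group G] [Fintype G] [DecidableEq G]
    (C : Finset G) (hC : ∀ g ∈ C, ∀ h : G, h * g * h⁻¹ ∈ C)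
    (ζ : ℂ) (hζ : IsPrimitiveRoot ζ (Monoid.exponent G))
    (t : ℕ) (ht : Nat.Coprime t (Monoid.exponent G))
    (σ : ℚ⟮ζ⟯ ≃ₐ[ℚ] ℚ⟮ζ⟯)
    (hσ : (σ ⟨ζ, IntermediateField.mem_adjoin_simple_self ℚ ζ⟩ : ℂ) = ζ ^ t)
    (hfix : ∀ (x : G) (ω : ℂ), ω ^ orderOf x = 1 →
      ∀ hS : inducedCharSum C x ω ∈ ℚ⟮ζ⟯,
        (σ ⟨inducedCharSum C x ω, hS⟩ : ℂ) = inducedCharSum C x ω)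
    (hdiv : ∀ x ∈ C, ∀ i : ℕ, i ∣ orderOf x → 1 < i → i < orderOf x →
      (x ^ (i * t) ∈ C ↔ x ^ i ∈ C)) :
    ∀ x ∈ C, x ^ t ∈ C := by
  intro x hx
  by_cases hn1 : orderOf x = 1
  · rw [orderOf_eq_one_iff.mp hn1] at hx ⊢
    simpa using hx
  set n := orderOf x with hndef
  have hn0 : 0 < n := orderOf_pos x
  have hn2 : 1 < n := by omega
  set m := Monoid.exponent G with hmdef
  have hm0 : 0 < m := Monoid.exponent_pos.mpr (Monoid.ExponentExists.of_finite)
  have hmn : n ∣ m := Monoid.order_dvd_exponent x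
  have htn : Nat.Coprime t n := Nat.Coprime.coprime_dvd_right hmn ht
  set η : ℂ := ζ ^ (m / n) with hηdef
  have hη : IsPrimitiveRoot η n := hζ.pow hm0 (Nat.div_mul_cancel hmn).symm
  set a : ℕ → ℕ := fun i => ∑ z ∈ C, (Finset.univ.filter fun y : G => y⁻¹ * z * y = x ^ i).card
    with hadef
  -- the element ζ of ℚ⟮ζ⟯
  set zq : ℚ⟮ζ⟯ := ⟨ζ, IntermediateField.mem_adjoin_simple_self ℚ ζ⟩ with hzq
  have hσζ : σ zq = zq ^ t := by
    apply Subtype.ext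
    rw [hσ]
    push_cast
    rfl
  -- T k : the sum expressed inside ℚ⟮ζ⟯
  set T : ℕ → ℚ⟮ζ⟯ := fun k =>
    (n : ℚ⟮ζ⟯)⁻¹ * ∑ i ∈ range n, (a i : ℚ⟮ζ⟯) * zq ^ (m / n * (k * i)) with hTdef
  have hcoeT : ∀ k, ((T k : ℂ)) = (n : ℂ)⁻¹ * ∑ i ∈ range n, (a i : ℂ) * η ^ (k * i) := by
    intro k
    push_cast [hTdef]
    congr 1
    refine Finset.sum_congr rfl fun i _ => ?_
    rw [hηdef, ← pow_mul]
  have hics : ∀ k, inducedCharSum C x (η ^ k) = ((T k : ℂ)) := by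
    intro k
    rw [hcoeT k, aux_claimA, ← hndef]
    congr 1
    refine Finset.sum_congr rfl fun i _ => ?_
    rw [← pow_mul]
  have hσT : ∀ k, σ (T k) = (n : ℚ⟮ζ⟯)⁻¹ * ∑ i ∈ range n, (a i : ℚ⟮ζ⟯) *
      (zq ^ (m / n * (k * i))) ^ t := by
    intro k
    rw [hTdef]
    simp only [map_mul, map_inv₀, map_natCast, map_sum, map_pow, hσζ]
    congr 1
    refine Finset.sum_congr rfl fun i _ => ?_
    rw [← pow_mul, ← pow_mul, Nat.mul_comm t]
  -- main equality for each k
  have E : ∀ k, ∑ i ∈ range n, (a i : ℂ) * η ^ (k * i * t)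
      = ∑ i ∈ range n, (a i : ℂ) * η ^ (k * i) := by
    intro k
    have hω : (η ^ k) ^ n = 1 := by
      rw [← pow_mul, Nat.mul_comm, pow_mul, hη.pow_eq_one, one_pow]
    have hS : inducedCharSum C x (η ^ k) ∈ ℚ⟮ζ⟯ := by
      rw [hics k]; exact (T k).2
    have hf := hfix x (η ^ k) hω hS
    have hsub : (⟨inducedCharSum C x (η ^ k), hS⟩ : ℚ⟮ζ⟯) = T k := Subtype.ext (hics k)
    rw [hsub, hics k] at hf
    have hcoeσ : ((σ (T k) : ℂ)) = (n : ℂ)⁻¹ * ∑ i ∈ range n, (a i : ℂ) * η ^ (k * i * t) := by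
      rw [hσT k]
      push_cast
      congr 1
      refine Finset.sum_congr rfl fun i _ => ?_
      rw [hηdef]
      rw [← pow_mul, ← pow_mul]
      ring_nf
      rfl
    rw [hcoeσ, hcoeT k] at hf
    have hne : ((n : ℂ))⁻¹ ≠ 0 := by
      simp [Nat.cast_ne_zero]
      omega
    exact mul_left_cancel₀ hne hf
  -- Fourier extraction
  have hts : 0 < t % n := by
    rcases Nat.eq_zero_or_pos (t % n) with h0 | h
    · exfalso
      have hd : n ∣ t := Nat.dvd_of_mod_eq_zero h0
      have h1 : n ∣ Nat.gcd t n := Nat.dvd_gcd hd dvd_rfl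
      rw [Nat.Coprime.gcd_eq_one htn] at h1
      have := Nat.le_of_dvd one_pos h1
      omega
    · exact h
  have hmod : t % n < n := Nat.mod_lt t hn0
  set s : ℕ := n - t % n with hsdef
  have hsum : s + t % n = n := by omega
  have hrw : ∀ (e : ℕ → ℕ), ∀ k ∈ range n,
      η ^ (k * s) * (∑ i ∈ range n, (a i : ℂ) * η ^ (k * e i))
        = ∑ i ∈ range n, (a i : ℂ) * η ^ (k * (s + e i)) := by
    intro e k _
    rw [Finset.mul_sum]
    refine Finset.sum_congr rfl fun i _ => ?_
    rw [← mul_assoc, mul_comm (η ^ (k * s)), mul_assoc, ← pow_add]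
    congr 2
    ring
  have hL : ∑ k ∈ range n, η ^ (k * s) * (∑ i ∈ range n, (a i : ℂ) * η ^ (k * (i * t)))
      = (a 1 : ℂ) * n := by
    rw [Finset.sum_congr rfl (hrw (fun i => i * t)), Finset.sum_comm]
    have h2 : ∀ i ∈ range n, ∑ k ∈ range n, (a i : ℂ) * η ^ (k * (s + i * t))
        = if i = 1 then (a 1 : ℂ) * n else 0 := by
      intro i hi
      rw [← Finset.mul_sum, aux_geom hη]
      rw [Finset.mem_range] at hi
      by_cases h : i = 1
      · subst h
        rw [if_pos ((aux_d1 hn2 htn s hsum 1 hn2).mpr rfl), if_pos rfl]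
      · rw [if_neg (fun hd => h ((aux_d1 hn2 htn s hsum i hi).mp hd)), if_neg h, mul_zero]
    rw [Finset.sum_congr rfl h2, Finset.sum_ite_eq' (range n) 1,
      if_pos (Finset.mem_range.mpr hn2)]
  have hR : ∑ k ∈ range n, η ^ (k * s) * (∑ i ∈ range n, (a i : ℂ) * η ^ (k * i))
      = (a (t % n) : ℂ) * n := by
    have hrw' : ∀ k ∈ range n, η ^ (k * s) * (∑ i ∈ range n, (a i : ℂ) * η ^ (k * i))
        = ∑ i ∈ range n, (a i : ℂ) * η ^ (k * (s + i)) := by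
      intro k hk
      have := hrw (fun i => i) k hk
      simpa using this
    rw [Finset.sum_congr rfl hrw', Finset.sum_comm]
    have h2 : ∀ i ∈ range n, ∑ k ∈ range n, (a i : ℂ) * η ^ (k * (s + i))
        = if i = t % n then (a (t % n) : ℂ) * n else 0 := by
      intro i hi
      rw [← Finset.mul_sum, aux_geom hη]
      rw [Finset.mem_range] at hi
      by_cases h : i = t % n
      · subst h
        rw [if_pos ((aux_d2 hn2 s hsum (t % n) hmod).mpr rfl), if_pos rfl]
      · rw [if_neg (fun hd => h ((aux_d2 hn2 s hsum i hi).mp hd)), if_neg h, mul_zero]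
    rw [Finset.sum_congr rfl h2, Finset.sum_ite_eq' (range n) (t % n),
      if_pos (Finset.mem_range.mpr hmod)]
  have hLR : (a 1 : ℂ) * n = (a (t % n) : ℂ) * n := by
    rw [← hL, ← hR]
    refine Finset.sum_congr rfl fun k _ => ?_
    congr 1
    have := E k
    simp only [Nat.mul_assoc] at this ⊢
    exact this
  have hnne : ((n : ℂ)) ≠ 0 := by
    simp only [Ne, Nat.cast_eq_zero]
    omega
  have haeq : a 1 = a (t % n) := by
    have := mul_right_cancel₀ hnne hLR
    exact_mod_cast this
  have ha1 : 0 < a 1 := by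
    simp only [hadef]
    apply Finset.sum_pos'
    · intro z _; exact Nat.zero_le _
    · exact ⟨x, hx, Finset.card_pos.mpr ⟨1, by simp⟩⟩
  have hat : 0 < a (t % n) := haeq ▸ ha1
  have hex : ∃ z ∈ C, ∃ y : G, y⁻¹ * z * y = x ^ (t % n) := by
    by_contra hne
    push_neg at hne
    have h0 : a (t % n) = 0 := by
      simp only [hadef]
      refine Finset.sum_eq_zero fun z hz => ?_
      rw [Finset.card_eq_zero]
      exact Finset.filter_eq_empty_iff.mpr fun y _ => hne z hz y
    omega
  obtain ⟨z, hz, y, hy⟩ := hex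
  have hmem : x ^ (t % n) ∈ C := by
    rw [← hy]
    have := hC z hz y⁻¹
    rwa [inv_inv] at this
  rwa [pow_mod_orderOf] at hmem
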